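/- The special matrix product over sets of (nonterminal, cost) pairs reduces to tropical matrix multiplication: for matrices a, b with entries being sets of (nonterminal, cost) pairs, define for each nonterminal B the ℕ∪{∞}-matrix a_B by a_B[i,j] = ℓ if (B,ℓ) ∈ a[i,j] and ∞ otherwise, similarly b_C. Then the product c = a·b (with c_{ij} = ∪_k a_{ik} ⊙ b_{kj}) satisfies: (A,q) ∈ c[i,j] if and only if q = min over productions A →^m BC of m + (a_B ⊗ b_C)[i,j] and this minimum is finite, where ⊗ denotes the tropical product. -/

import Mathlib

open Classical in
/-- The product `⊙` with respect to a finite set `P'` of weighted binary productions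
`(A, B, C, m)` meaning `A →^m BC`. -/
noncomputable def odot {N : Type*} (P' : Finset (N × N × N × ℕ))
    (f g : N → Option ℕ) : N → Option ℕ := fun A =>
  let s : Set ℕ := {v | ∃ B C m k ℓ, (A, B, C, m) ∈ P' ∧ f B = some k ∧ g C = some ℓ ∧
    v = k + ℓ + m}
  if s.Nonempty then some (sInf s) else none

open Classical in
/-- Indexed min-union of a family of sets of (nonterminal, cost) pairs. -/
noncomputable def bigU {N ι : Type*} (f : ι → N → Option ℕ) : N → Option ℕ := fun A =>
  if {v : ℕ | ∃ i, f i A = some v}.Nonempty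
  then some (sInf {v : ℕ | ∃ i, f i A = some v}) else none

/-- Matrix product over the min-union/⊙ structure: `c i j = ⋃ₖ (a i k) ⊙ (b k j)`. -/
noncomputable def matmul {N : Type*} {n : ℕ} (P' : Finset (N × N × N × ℕ))
    (a b : Fin n → Fin n → N → Option ℕ) : Fin n → Fin n → N → Option ℕ :=
  fun i j => bigU (fun k => odot P' (a i k) (b k j))

/-- For a nonterminal `B`, the `ℕ∞`-matrix `a_B` with `a_B[i,j] = ℓ` if `(B,ℓ) ∈ a[i,j]`
and `∞` otherwise. -/
def matOf {N : Type*} {n : ℕ} (a : Fin n → Fin n → N → Option ℕ) (B : N) :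
    Matrix (Fin n) (Fin n) ℕ∞ := fun i j => (a i j B).elim ⊤ (fun ℓ => (ℓ : ℕ∞))

/-- Tropical (min-plus) product of matrices over `ℕ ∪ {∞}`. -/
noncomputable def tropMul {n : ℕ} (X Y : Matrix (Fin n) (Fin n) ℕ∞) :
    Matrix (Fin n) (Fin n) ℕ∞ := fun i j => ⨅ k, (X i k + Y k j)

private lemma odot_eq_some_iff {N : Type*} (P' : Finset (N × N × N × ℕ))
    (f g : N → Option ℕ) (A : N) (v : ℕ) :
    odot P' f g A = some v ↔
      (∃ B C m k ℓ, (A, B, C, m) ∈ P' ∧ f B = some k ∧ g C = some ℓ ∧ v = k + ℓ + m) ∧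
      ∀ u, (∃ B C m k ℓ, (A, B, C, m) ∈ P' ∧ f B = some k ∧ g C = some ℓ ∧ u = k + ℓ + m)
        → v ≤ u := by
  classical
  set s : Set ℕ := {w | ∃ B C m k ℓ, (A, B, C, m) ∈ P' ∧ f B = some k ∧ g C = some ℓ ∧
    w = k + ℓ + m} with hs
  have hodot : odot P' f g A = if s.Nonempty then some (sInf s) else none := rfl
  rw [hodot]
  split_ifs with h
  · simp only [Option.some.injEq]
    constructor
    · rintro rfl
      exact ⟨Nat.sInf_mem h, fun u hu => Nat.sInf_le hu⟩
    · rintro ⟨hv, hlb⟩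
      exact le_antisymm (Nat.sInf_le hv) (hlb _ (Nat.sInf_mem h))
  · simp only [false_iff, reduceCtorEq]
    rintro ⟨hv, -⟩
    exact h ⟨v, hv⟩

private lemma bigU_eq_some_iff {N ι : Type*} (f : ι → N → Option ℕ) (A : N) (v : ℕ) :
    bigU f A = some v ↔
      (∃ i, f i A = some v) ∧ ∀ u, (∃ i, f i A = some u) → v ≤ u := by
  classical
  set s : Set ℕ := {w | ∃ i, f i A = some w} with hs
  have hb : bigU f A = if s.Nonempty then some (sInf s) else none := rfl
  rw [hb]
  split_ifs with h
  · simp only [Option.some.injEq]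
    constructor
    · rintro rfl
      exact ⟨Nat.sInf_mem h, fun u hu => Nat.sInf_le hu⟩
    · rintro ⟨hv, hlb⟩
      exact le_antisymm (Nat.sInf_le hv) (hlb _ (Nat.sInf_mem h))
  · simp only [false_iff, reduceCtorEq]
    rintro ⟨hv, -⟩
    exact h ⟨v, hv⟩

private lemma coe_lt_coe_add_one (q : ℕ) : (q : ℕ∞) < (q : ℕ∞) + 1 := by
  exact_mod_cast Nat.lt_succ_self q

private lemma enat_le_of_lt_add_one {c : ℕ∞} {q : ℕ} (h : c < (q : ℕ∞) + 1) : c ≤ (q : ℕ∞) := by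
  have h' : c < ((q + 1 : ℕ) : ℕ∞) := by push_cast; exact h
  lift c to ℕ using ne_top_of_lt h'
  exact_mod_cast Nat.lt_succ_iff.mp (by exact_mod_cast h')

private lemma enat_add_eq_coe {x y : ℕ∞} {r : ℕ} (h : x + y = (r : ℕ∞)) :
    ∃ a c : ℕ, x = a ∧ y = c ∧ a + c = r := by
  lift x to ℕ using (by rintro rfl; simp at h)
  lift y to ℕ using (by rintro rfl; simp at h)
  exact ⟨x, y, rfl, rfl, by exact_mod_cast h⟩

private lemma enat_iInf_attained {n : ℕ} {f : Fin n → ℕ∞} {r : ℕ}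
    (h : ⨅ k, f k = (r : ℕ∞)) : ∃ k, f k = (r : ℕ∞) := by
  have h1 : ⨅ k, f k < (r : ℕ∞) + 1 := by rw [h]; exact coe_lt_coe_add_one r
  obtain ⟨k, hk⟩ := iInf_lt_iff.mp h1
  exact ⟨k, le_antisymm (enat_le_of_lt_add_one hk) (h ▸ iInf_le _ k)⟩

private lemma matOf_eq_coe {N : Type*} {n : ℕ} {a : Fin n → Fin n → N → Option ℕ}
    {B : N} {i j : Fin n} {x : ℕ} :
    matOf a B i j = (x : ℕ∞) ↔ a i j B = some x := by
  cases h : a i j B <;> simp [matOf, h]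

/-- The special matrix product over sets of (nonterminal, cost) pairs reduces to
tropical matrix multiplication: `(A, q)` belongs to `(a ⋅ b)[i,j]` iff `q` is the
(finite) minimum over productions `A →^m BC` of `m + (a_B ⊗ b_C)[i,j]`. -/
theorem matmul_reduces_to_tropical {N : Type*} {n : ℕ}
    (P' : Finset (N × N × N × ℕ)) (a b : Fin n → Fin n → N → Option ℕ) :
    ∀ (A : N) (i j : Fin n) (q : ℕ),
      matmul P' a b i j A = some q ↔
        sInf {c : ℕ∞ | ∃ B C m, (A, B, C, m) ∈ P' ∧
          c = (m : ℕ∞) + tropMul (matOf a B) (matOf b C) i j} = (q : ℕ∞) := by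
  intro A i j q
  -- The common characterization: q is the least element of the set U of all
  -- k-split costs x + y + m over productions A →^m BC.
  have fk : ∀ (B C : N) (k : Fin n) (x y : ℕ), a i k B = some x → b k j C = some y →
      matOf a B i k + matOf b C k j = ((x + y : ℕ) : ℕ∞) := by
    intro B C k x y ha hb
    simp [matOf, ha, hb]
  have key1 : matmul P' a b i j A = some q ↔
      (∃ k B C m x y, (A, B, C, m) ∈ P' ∧ a i k B = some x ∧ b k j C = some y ∧
        q = x + y + m) ∧
      ∀ u, (∃ k B C m x y, (A, B, C, m) ∈ P' ∧ a i k B = some x ∧ b k j C = some y ∧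
        u = x + y + m) → q ≤ u := by
    have hmm : matmul P' a b i j A = bigU (fun k => odot P' (a i k) (b k j)) A := rfl
    rw [hmm, bigU_eq_some_iff]
    constructor
    · rintro ⟨⟨k, hk⟩, hlb⟩
      obtain ⟨⟨B, C, m, x, y, hp, ha, hb, hq⟩, -⟩ := (odot_eq_some_iff _ _ _ _ _).mp hk
      refine ⟨⟨k, B, C, m, x, y, hp, ha, hb, hq⟩, ?_⟩
      rintro u ⟨k', B', C', m', x', y', hp', ha', hb', rfl⟩
      -- the k'-th odot is some of the inf of a nonempty set, an element ≤ u
      set s' : Set ℕ := {w | ∃ B C m x y, (A, B, C, m) ∈ P' ∧ a i k' B = some x ∧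
        b k' j C = some y ∧ w = x + y + m} with hs'
      have hne : s'.Nonempty := ⟨x' + y' + m', B', C', m', x', y', hp', ha', hb', rfl⟩
      have hod : odot P' (a i k') (b k' j) A = some (sInf s') :=
        (odot_eq_some_iff _ _ _ _ _).mpr ⟨Nat.sInf_mem hne, fun u hu => Nat.sInf_le hu⟩
      exact le_trans (hlb _ ⟨k', hod⟩)
        (Nat.sInf_le ⟨B', C', m', x', y', hp', ha', hb', rfl⟩)
    · rintro ⟨⟨k, B, C, m, x, y, hp, ha, hb, hq⟩, hlb⟩
      have hod : odot P' (a i k) (b k j) A = some q := by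
        refine (odot_eq_some_iff _ _ _ _ _).mpr ⟨⟨B, C, m, x, y, hp, ha, hb, hq⟩, ?_⟩
        rintro u ⟨B', C', m', x', y', hp', ha', hb', rfl⟩
        exact hlb _ ⟨k, B', C', m', x', y', hp', ha', hb', rfl⟩
      refine ⟨⟨k, hod⟩, ?_⟩
      rintro u ⟨k', hk'⟩
      obtain ⟨⟨B', C', m', x', y', hp', ha', hb', rfl⟩, -⟩ :=
        (odot_eq_some_iff _ _ _ _ _).mp hk'
      exact hlb _ ⟨k', B', C', m', x', y', hp', ha', hb', rfl⟩
  rw [key1]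
  set T : Set ℕ∞ := {c | ∃ B C m, (A, B, C, m) ∈ P' ∧
    c = (m : ℕ∞) + tropMul (matOf a B) (matOf b C) i j} with hT
  constructor
  · rintro ⟨⟨k, B, C, m, x, y, hp, ha, hb, rfl⟩, hlb⟩
    apply le_antisymm
    · -- sInf T ≤ q via the element for production (B, C, m)
      have hcT : ((m : ℕ∞) + tropMul (matOf a B) (matOf b C) i j) ∈ T :=
        ⟨B, C, m, hp, rfl⟩
      refine le_trans (sInf_le hcT) ?_
      have h5 : tropMul (matOf a B) (matOf b C) i j ≤ ((x + y : ℕ) : ℕ∞) := by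
        have := fk B C k x y ha hb
        calc ⨅ k', matOf a B i k' + matOf b C k' j ≤ matOf a B i k + matOf b C k j :=
              iInf_le _ k
          _ = ((x + y : ℕ) : ℕ∞) := this
      calc (m : ℕ∞) + tropMul (matOf a B) (matOf b C) i j
          ≤ (m : ℕ∞) + ((x + y : ℕ) : ℕ∞) := add_le_add (le_refl _) h5
        _ = ((x + y + m : ℕ) : ℕ∞) := by push_cast; ring
    · apply le_sInf
      rintro c ⟨B', C', m', hp', rfl⟩
      by_cases hh : tropMul (matOf a B') (matOf b C') i j = ⊤
      · rw [hh, add_top]; exact le_top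
      · obtain ⟨r, hr⟩ := Option.ne_none_iff_exists.mp hh
        have hr' : tropMul (matOf a B') (matOf b C') i j = (r : ℕ∞) := hr.symm
        have hattn : ∃ k', matOf a B' i k' + matOf b C' k' j = (r : ℕ∞) :=
          enat_iInf_attained hr'
        obtain ⟨k', hk'⟩ := hattn
        obtain ⟨x', y', hx', hy', hxy⟩ := enat_add_eq_coe hk'
        have ha' : a i k' B' = some x' := matOf_eq_coe.mp hx'
        have hb' : b k' j C' = some y' := matOf_eq_coe.mp hy'
        have hq : x + y + m ≤ x' + y' + m' :=
          hlb _ ⟨k', B', C', m', x', y', hp', ha', hb', rfl⟩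
        rw [hr']
        calc ((x + y + m : ℕ) : ℕ∞) ≤ ((x' + y' + m' : ℕ) : ℕ∞) := by exact_mod_cast hq
          _ = (m' : ℕ∞) + (r : ℕ∞) := by rw [← hxy]; push_cast; ring
  · intro h
    have hlbT : ∀ c ∈ T, (q : ℕ∞) ≤ c := fun c hc => h ▸ sInf_le hc
    have hmem : (q : ℕ∞) ∈ T := by
      have h1 : sInf T < (q : ℕ∞) + 1 := by rw [h]; exact coe_lt_coe_add_one q
      obtain ⟨c, hc, hlt⟩ := sInf_lt_iff.mp h1
      have h2 : c ≤ (q : ℕ∞) := enat_le_of_lt_add_one hlt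
      have h3 : (q : ℕ∞) ≤ c := hlbT c hc
      rwa [le_antisymm h2 h3] at hc
    obtain ⟨B, C, m, hp, heq⟩ := hmem
    obtain ⟨m', r, hm', ht, hmr⟩ := enat_add_eq_coe heq.symm
    have hm'' : m' = m := by exact_mod_cast hm'.symm
    obtain ⟨k, hk⟩ := enat_iInf_attained (f := fun k => matOf a B i k + matOf b C k j) ht
    obtain ⟨x, y, hx, hy, hxy⟩ := enat_add_eq_coe hk
    have ha : a i k B = some x := matOf_eq_coe.mp hx
    have hb : b k j C = some y := matOf_eq_coe.mp hy
    have hqval : q = x + y + m := by omega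
    refine ⟨⟨k, B, C, m, x, y, hp, ha, hb, hqval⟩, ?_⟩
    rintro u ⟨k', B', C', m'', x', y', hp', ha', hb', rfl⟩
    have hcT : ((m'' : ℕ∞) + tropMul (matOf a B') (matOf b C') i j) ∈ T :=
      ⟨B', C', m'', hp', rfl⟩
    have h4 : (q : ℕ∞) ≤ (m'' : ℕ∞) + tropMul (matOf a B') (matOf b C') i j := hlbT _ hcT
    have h5 : tropMul (matOf a B') (matOf b C') i j ≤ ((x' + y' : ℕ) : ℕ∞) := by
      have := fk B' C' k' x' y' ha' hb'
      calc ⨅ k'', matOf a B' i k'' + matOf b C' k'' j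
          ≤ matOf a B' i k' + matOf b C' k' j := iInf_le _ k'
        _ = ((x' + y' : ℕ) : ℕ∞) := this
    have h6 : (q : ℕ∞) ≤ ((x' + y' + m'' : ℕ) : ℕ∞) := by
      refine h4.trans ?_
      calc (m'' : ℕ∞) + tropMul (matOf a B') (matOf b C') i j
          ≤ (m'' : ℕ∞) + ((x' + y' : ℕ) : ℕ∞) := add_le_add (le_refl _) h5
        _ = ((x' + y' + m'' : ℕ) : ℕ∞) := by push_cast; ring
    exact_mod_cast h6
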